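/- Let J be as given; suppose that every edge of the coding graph E_J is non-negative, that E_J contains no non-positive cycles, and that the labeled graph (E_J, E) is left-synchronizing with delay m. Then for every infinite path α ∈ E^∞ there exists a unique infinite path ω in E_J with E(ω) = α, where the E-label of an infinite path in E_J is the infinite word formed by the distinguished first edges e of the second coordinates of the vertices it visits. Moreover, the map α ↦ ω is a sliding block code: there is a map φ from the set of paths of length m+2 in E to the edge set of E_J such that for every α ∈ E^∞ the unique lift ω satisfies ω_i = φ(α_i α_{i+1} ⋯ α_{i+m+1}) for all i ≥ 1. -/

import Mathlib

/-- A finite directed multigraph. -/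
structure FinGraph where
  V : Type
  E : Type
  fintV : Fintype V
  fintE : Fintype E
  src : E → V
  rng : E → V

variable {G : FinGraph}

/-- A finite path in the graph `G`: a source vertex together with a compatible
list of edges (a vertex is a path of length 0). -/
structure FPath (G : FinGraph) where
  source : G.V
  edges : List G.E
  head_src : ∀ e ∈ edges.head?, G.src e = source
  chain : edges.Chain' fun e f => G.rng e = G.src f

/-- The range (terminal vertex) of a finite path. -/
def FPath.range (p : FPath G) : G.V :=
  p.edges.getLast?.elim p.source G.rng

/-- The length-0 path at a vertex. -/
def FPath.nil (G : FinGraph) (v : G.V) : FPath G :=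
  ⟨v, [], by simp, List.isChain_nil⟩

/-- `p.Prefix q` : the path `p` is an initial segment of the path `q`. -/
def FPath.Prefix (p q : FPath G) : Prop :=
  p.source = q.source ∧ p.edges <+: q.edges

/-- The path obtained by removing the first edge (the tail `κ` of `ν = eκ`). -/
def FPath.tail (p : FPath G) : FPath G where
  source := p.edges.head?.elim p.source G.rng
  edges := p.edges.tail
  head_src := by
    cases hp : p.edges with
    | nil => simp
    | cons a l =>
      have h := p.chain
      rw [hp] at h
      replace h := List.isChain_cons.mp h
      intro e he
      simp only [hp, List.head?_cons, Option.elim, List.tail_cons] at he ⊢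
      exact (h.1 e he).symm
  chain := p.chain.tail

/-- An infinite path in the graph `G`. -/
structure IPath (G : FinGraph) where
  edges : ℕ → G.E
  chain : ∀ i, G.rng (edges i) = G.src (edges (i + 1))

/-- The source vertex of an infinite path. -/
def IPath.source (p : IPath G) : G.V := G.src (p.edges 0)

/-- The cylinder set `Z(p)` of a finite path `p`: all infinite paths with prefix `p`. -/
def cylinder (p : FPath G) : Set (IPath G) :=
  {q | q.source = p.source ∧ ∀ i, (h : i < p.edges.length) → q.edges i = p.edges.get ⟨i, h⟩}

/-- A finite collection `S` of finite paths is a partition of the path `ν`: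
the cylinder sets are pairwise disjoint with union `Z(ν)`. -/
def IsPartitionOfPath (S : Set (FPath G)) (ν : FPath G) : Prop :=
  S.Finite ∧ (∀ p ∈ S, ∀ q ∈ S, p ≠ q → cylinder p ∩ cylinder q = ∅) ∧
    (⋃ p ∈ S, cylinder p) = cylinder ν

/-- A finite collection `S` of finite paths is a partition of the vertex `v`. -/
def IsPartitionOf (S : Set (FPath G)) (v : G.V) : Prop :=
  IsPartitionOfPath S (FPath.nil G v)

/-- Standing assumptions: no sinks, no sources, every cycle has an exit. -/
structure Standing (G : FinGraph) : Prop where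
  no_sinks : ∀ v : G.V, ∃ e, G.src e = v
  no_sources : ∀ v : G.V, ∃ e, G.rng e = v
  cycles_exit : ∀ p : FPath G, p.edges ≠ [] → p.range = p.source →
    ∃ e ∈ p.edges, ∃ f, f ≠ e ∧ G.src f = G.src e

/-- The combinatorial conditions making `u_J = Σ_{(μ,ν) ∈ J} S_μ S_ν^*` a unitary:
`J` is finite, `s(μ) = s(ν)`, `r(μ) = r(ν)`, `|ν| ≥ 1` for all `(μ,ν) ∈ J`, and both
families of cylinder sets are pairwise disjoint with union all of `E^∞`. -/
structure IsUnitaryJ (G : FinGraph) (J : Set (FPath G × FPath G)) : Prop where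
  finite : J.Finite
  src_eq : ∀ p ∈ J, (Prod.fst p).source = (Prod.snd p).source
  rng_eq : ∀ p ∈ J, FPath.range (Prod.fst p) = FPath.range (Prod.snd p)
  ne_nil : ∀ p ∈ J, (Prod.snd p).edges ≠ []
  disj₁ : ∀ p ∈ J, ∀ q ∈ J, p ≠ q → cylinder (Prod.fst p) ∩ cylinder (Prod.fst q) = ∅
  union₁ : (⋃ p ∈ J, cylinder (Prod.fst p)) = Set.univ
  disj₂ : ∀ p ∈ J, ∀ q ∈ J, p ≠ q → cylinder (Prod.snd p) ∩ cylinder (Prod.snd q) = ∅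
  union₂ : (⋃ p ∈ J, cylinder (Prod.snd p)) = Set.univ

/-- Adjacency in the coding graph `E_J`: there is an edge from `p = (μ₁, e₁ν₁)` to
`q = (μ₂, e₂ν₂)` iff the tail `ν₁` and `μ₂` are prefix-comparable
(the combinatorial content of `S_{ν₁}^* S_{μ₂} ≠ 0`). -/
def CGAdj (p q : FPath G × FPath G) : Prop :=
  FPath.Prefix p.2.tail q.1 ∨ FPath.Prefix q.1 p.2.tail

/-- The degree `|μ₂| − |ν₁|` of the coding-graph edge from `p` to `q`. -/
def cgDeg (p q : FPath G × FPath G) : ℤ :=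
  (q.1.edges.length : ℤ) - (p.2.tail.edges.length : ℤ)

/-- `IsAppend p q r` : the path `r` is the concatenation `p q`. -/
def IsAppend (p q r : FPath G) : Prop :=
  r.source = p.source ∧ q.source = p.range ∧ r.edges = p.edges ++ q.edges

/-- A finite path in the coding graph `E_J`, recorded by the (nonempty) list of
vertices of `J` it visits (a single vertex is a path of length 0). -/
structure CGPath (G : FinGraph) (J : Set (FPath G × FPath G)) where
  verts : List (FPath G × FPath G)
  ne : verts ≠ []
  mem : ∀ v ∈ verts, v ∈ J
  adj : verts.Chain' CGAdj

/-- The `E`-label of a path in the coding graph: the list of distinguished first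
edges `e` of the second coordinates of the vertices it visits. -/
def CGPath.elabel {J : Set (FPath G × FPath G)} (ω : CGPath G J) : List G.E :=
  ω.verts.filterMap fun v => v.2.edges.head?

/-- `IsLabelOf l γ` : `γ` is the `L_J`-label of the coding-graph path visiting the
vertices in the list `l` (all of whose edges are non-negative): the concatenation of
the `L_J`-labels of its edges, and the empty path at `r(μ)` for the length-0 path
at a vertex `(μ, eν)`. -/
inductive IsLabelOf : List (FPath G × FPath G) → FPath G → Prop
  | single (p : FPath G × FPath G) (γ : FPath G) :
      γ.edges = [] → γ.source = FPath.range p.1 → IsLabelOf [p] γ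
  | cons (p q : FPath G × FPath G) (rest : List (FPath G × FPath G)) (α γ δ : FPath G) :
      IsAppend p.2.tail α q.1 → IsLabelOf (q :: rest) γ → IsAppend α γ δ →
      IsLabelOf (p :: q :: rest) δ

/-- Every edge of the coding graph `E_J` is non-negative. -/
def AllEdgesNonneg (G : FinGraph) (J : Set (FPath G × FPath G)) : Prop :=
  ∀ p ∈ J, ∀ q ∈ J, CGAdj p q → 0 ≤ cgDeg p q

/-- The coding graph `E_J` contains a non-positive cycle. -/
def HasNonposCycle (G : FinGraph) (J : Set (FPath G × FPath G)) : Prop :=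
  ∃ ω : CGPath G J, 2 ≤ ω.verts.length ∧ ω.verts.getLast ω.ne = ω.verts.head ω.ne ∧
    ω.verts.Chain' fun p q => cgDeg p q ≤ 0

/-- All outgoing edges of the vertex `p` in the coding graph `E_J` are positive. -/
def AllOutPositive (G : FinGraph) (J : Set (FPath G × FPath G))
    (p : FPath G × FPath G) : Prop :=
  ∀ q ∈ J, CGAdj p q → 0 < cgDeg p q

/-- `IsSnoc p f q` : the path `q` is `p` extended by the single edge `f`. -/
def IsSnoc (p : FPath G) (f : G.E) (q : FPath G) : Prop :=
  q.source = p.source ∧ q.edges = p.edges ++ [f]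

/-- `IsSplitting G J p J'` : `J'` is the splitting of `J` at the vertex `p = (μ, eν)`,
i.e. `J' = (J ∖ {(μ,eν)}) ∪ {(μf, eνf) : f ∈ E¹, s(f) = r(μ)}`. -/
def IsSplitting (G : FinGraph) (J : Set (FPath G × FPath G)) (p : FPath G × FPath G)
    (J' : Set (FPath G × FPath G)) : Prop :=
  p ∈ J ∧ ∀ q, q ∈ J' ↔ (q ∈ J ∧ q ≠ p) ∨
    ∃ f, G.src f = FPath.range p.1 ∧ IsSnoc p.1 f q.1 ∧ IsSnoc p.2 f q.2

/-- The set of negative edges of the coding graph `E_J`. -/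
def negEdgeSet (G : FinGraph) (J : Set (FPath G × FPath G)) :
    Set ((FPath G × FPath G) × (FPath G × FPath G)) :=
  {e | e.1 ∈ J ∧ e.2 ∈ J ∧ CGAdj e.1 e.2 ∧ cgDeg e.1 e.2 < 0}

/-- `IsFinalNeg G J p q ω d` : the edge from `p` to `q` in `E_J` is a final negative
edge with destination `d`, via the zero path `ω` from `q` to `d`; the height of the
edge is `ω.verts.length - 1`. -/
def IsFinalNeg (G : FinGraph) (J : Set (FPath G × FPath G))
    (p q : FPath G × FPath G) (ω : CGPath G J) (d : FPath G × FPath G) : Prop :=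
  p ∈ J ∧ q ∈ J ∧ CGAdj p q ∧ cgDeg p q < 0 ∧
    ω.verts.head ω.ne = q ∧ ω.verts.getLast ω.ne = d ∧
    (ω.verts.Chain' fun a b => cgDeg a b = 0) ∧ AllOutPositive G J d

/-- `(E_J, E)` is left-synchronizing with delay `m` : any two paths of length `m`
(i.e. with `m+1` vertices) in `E_J` with the same `E`-label have the same source. -/
def LeftSyncDelay (G : FinGraph) (J : Set (FPath G × FPath G)) (m : ℕ) : Prop :=
  ∀ ω ξ : CGPath G J, ω.verts.length = m + 1 → ξ.verts.length = m + 1 →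
    ω.elabel = ξ.elabel → ω.verts.head ω.ne = ξ.verts.head ξ.ne

/-- An infinite path in the coding graph `E_J`. -/
structure CGIPath (G : FinGraph) (J : Set (FPath G × FPath G)) where
  verts : ℕ → FPath G × FPath G
  mem : ∀ i, verts i ∈ J
  adj : ∀ i, CGAdj (verts i) (verts (i + 1))

/-- The infinite `E`-label of an infinite coding-graph path is the infinite path `α`. -/
def ELabelInf {J : Set (FPath G × FPath G)} (ω : CGIPath G J) (α : IPath G) : Prop :=
  ∀ i, (ω.verts i).2.edges.head? = some (α.edges i)

/-- A transducer with input alphabet `A`, output alphabet `B`, a finite state set,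
an initial state and a transition function. -/
structure Transducer (A B : Type) where
  S : Type
  finS : Finite S
  init : S
  tr : S → A → S × List B

/-- The state sequence of a transducer on an infinite input word. -/
def Transducer.states {A B : Type} (T : Transducer A B) (α : ℕ → A) : ℕ → T.S
  | 0 => T.init
  | n + 1 => (T.tr (T.states α n) (α n)).1

/-- The `n`-th output block of a transducer on an infinite input word. -/
def Transducer.outBlock {A B : Type} (T : Transducer A B) (α : ℕ → A) (n : ℕ) : List B :=
  (T.tr (T.states α n) (α n)).2

/-- The concatenation of the first `n` blocks of a sequence of finite words. -/
def joinUpTo {X : Type} (f : ℕ → List X) (n : ℕ) : List X :=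
  ((List.range n).map f).flatten

/-- Two infinite concatenations of sequences of finite words are equal. -/
def StreamsEq {X : Type} (f g : ℕ → List X) : Prop :=
  (∀ n, ∃ m, joinUpTo f n <+: joinUpTo g m) ∧ ∀ n, ∃ m, joinUpTo g n <+: joinUpTo f m

/-- The type of edges of the coding graph `E_J`. -/
def CGEdgeT (G : FinGraph) (J : Set (FPath G × FPath G)) : Type :=
  {e : (FPath G × FPath G) × (FPath G × FPath G) // e.1 ∈ J ∧ e.2 ∈ J ∧ CGAdj e.1 e.2}

/-- The sequence of edges of an infinite coding-graph path. -/
def CGIPath.edgeSeq {J : Set (FPath G × FPath G)} (ω : CGIPath G J) (i : ℕ) : CGEdgeT G J :=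
  ⟨(ω.verts i, ω.verts (i + 1)), ω.mem i, ω.mem (i + 1), ω.adj i⟩


/-! ### Auxiliary development for the proof -/

section AuxLift

variable {G : FinGraph}

/-- Prepend an edge to an infinite path. -/
def myCons (e : G.E) (x : IPath G) (h : G.rng e = x.source) : IPath G where
  edges := fun i => match i with
    | 0 => e
    | (n + 1) => x.edges n
  chain := by
    intro i
    match i with
    | 0 => exact h
    | (n + 1) => exact x.chain n

/-- Shift an infinite path by `j`. -/
def shiftP (α : IPath G) (j : ℕ) : IPath G where
  edges := fun i => α.edges (j + i)
  chain := fun i => by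
    have h := α.chain (j + i)
    rwa [show j + i + 1 = j + (i + 1) by omega] at h

/-- A choice of edge sequence extending from a vertex. -/
noncomputable def extSeq (hG : Standing G) (v : G.V) : ℕ → G.E
  | 0 => (hG.no_sinks v).choose
  | (n + 1) => (hG.no_sinks (G.rng (extSeq hG v n))).choose

lemma extSeq_src_zero (hG : Standing G) (v : G.V) : G.src (extSeq hG v 0) = v :=
  (hG.no_sinks v).choose_spec

lemma extSeq_src_succ (hG : Standing G) (v : G.V) (n : ℕ) :
    G.src (extSeq hG v (n + 1)) = G.rng (extSeq hG v n) :=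
  (hG.no_sinks (G.rng (extSeq hG v n))).choose_spec

lemma head?_eq_get {A : Type*} (l : List A) (h : 0 < l.length) :
    l.head? = some (l.get ⟨0, h⟩) := by
  have hne : l ≠ [] := List.length_pos_iff.mp h
  rw [List.head?_eq_head hne, List.get_eq_getElem, List.head_eq_getElem]

/-- Extend a finite path to an infinite path. -/
noncomputable def extPath (hG : Standing G) (ρ : FPath G) : IPath G where
  edges := fun i =>
    if h : i < ρ.edges.length then ρ.edges.get ⟨i, h⟩
    else extSeq hG ρ.range (i - ρ.edges.length)
  chain := by
    intro i
    by_cases h1 : i + 1 < ρ.edges.length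
    · have h0 : i < ρ.edges.length := by omega
      rw [dif_pos h0, dif_pos h1]
      exact List.isChain_iff_getElem.mp ρ.chain i (by omega)
    · by_cases h0 : i < ρ.edges.length
      · have hi : i = ρ.edges.length - 1 := by omega
        rw [dif_pos h0, dif_neg h1]
        have hne : ρ.edges ≠ [] := by
          intro h; rw [h] at h0; simp at h0
        have hr : ρ.range = G.rng (ρ.edges.get ⟨i, h0⟩) := by
          unfold FPath.range
          rw [List.getLast?_eq_getLast hne]
          show G.rng (ρ.edges.getLast hne) = _
          rw [List.getLast_eq_getElem, List.get_eq_getElem]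
          subst hi
          rfl
        rw [show i + 1 - ρ.edges.length = 0 by omega, extSeq_src_zero, hr]
      · rw [dif_neg h0, dif_neg (by omega : ¬ i + 1 < ρ.edges.length)]
        rw [show i + 1 - ρ.edges.length = (i - ρ.edges.length) + 1 by omega]
        exact (extSeq_src_succ hG ρ.range (i - ρ.edges.length)).symm

lemma extPath_mem (hG : Standing G) (ρ : FPath G) : extPath hG ρ ∈ cylinder ρ := by
  constructor
  · show G.src ((extPath hG ρ).edges 0) = ρ.source
    show G.src (if h : 0 < ρ.edges.length then ρ.edges.get ⟨0, h⟩
        else extSeq hG ρ.range (0 - ρ.edges.length)) = ρ.source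
    by_cases h0 : 0 < ρ.edges.length
    · rw [dif_pos h0]
      apply ρ.head_src
      rw [head?_eq_get _ h0]
      rfl
    · rw [dif_neg h0, Nat.zero_sub, extSeq_src_zero]
      have hnil : ρ.edges = [] := List.length_eq_zero_iff.mp (by omega)
      unfold FPath.range
      rw [hnil]
      rfl
  · intro i h
    show (if hh : i < ρ.edges.length then ρ.edges.get ⟨i, hh⟩
        else extSeq hG ρ.range (i - ρ.edges.length)) = ρ.edges.get ⟨i, h⟩
    rw [dif_pos h]

lemma prefix_of_le {ρ τ : FPath G} {x : IPath G} (hρ : x ∈ cylinder ρ) (hτ : x ∈ cylinder τ)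
    (hlen : ρ.edges.length ≤ τ.edges.length) : ρ.Prefix τ := by
  constructor
  · rw [← hρ.1]; exact hτ.1
  · have heq : ρ.edges = τ.edges.take ρ.edges.length := by
      apply List.ext_getElem
      · simp [hlen]
      · intro i h1 h2
        have hiρ : i < ρ.edges.length := h1
        have hiτ : i < τ.edges.length := lt_of_lt_of_le hiρ hlen
        rw [List.getElem_take]
        have e1 := hρ.2 i hiρ
        have e2 := hτ.2 i hiτ
        rw [List.get_eq_getElem] at e1 e2
        rw [← e1, e2]
    rw [heq]
    exact List.take_prefix _ _

lemma adj_of_common (p q : FPath G × FPath G) (x : IPath G)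
    (h1 : x ∈ cylinder p.2.tail) (h2 : x ∈ cylinder q.1) : CGAdj p q := by
  rcases le_total p.2.tail.edges.length q.1.edges.length with h | h
  · exact Or.inl (prefix_of_le h1 h2 h)
  · exact Or.inr (prefix_of_le h2 h1 h)

lemma head?_of_cyl {ν : FPath G} {y : IPath G} (hy : y ∈ cylinder ν) (hne : ν.edges ≠ []) :
    ν.edges.head? = some (y.edges 0) := by
  have h0 : 0 < ν.edges.length := List.length_pos_iff.mpr hne
  have e := hy.2 0 h0
  rw [head?_eq_get _ h0]
  exact congrArg some e.symm

lemma tail_mem_of_cons {e : G.E} {x : IPath G} {h : G.rng e = x.source} {ν : FPath G}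
    (hy : myCons e x h ∈ cylinder ν) (hne : ν.edges ≠ []) : x ∈ cylinder ν.tail := by
  have h0 : 0 < ν.edges.length := List.length_pos_iff.mpr hne
  have he0 : ν.edges.get ⟨0, h0⟩ = e := (hy.2 0 h0).symm
  constructor
  · show x.source = ν.edges.head?.elim ν.source G.rng
    rw [head?_eq_get _ h0]
    show x.source = G.rng (ν.edges.get ⟨0, h0⟩)
    rw [he0]
    exact h.symm
  · intro i hi
    show x.edges i = ν.edges.tail.get ⟨i, hi⟩
    have hi' : i + 1 < ν.edges.length := by
      have := hi
      simp only [FPath.tail, List.length_tail] at this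
      omega
    have e1 := hy.2 (i + 1) hi'
    have : (myCons e x h).edges (i + 1) = x.edges i := rfl
    rw [this] at e1
    rw [e1, List.get_eq_getElem, List.get_eq_getElem]
    exact (List.getElem_tail ..).symm

lemma filterMap_ofFn {A B : Type*} {n : ℕ} (f : Fin n → A) (F : A → Option B) (g : Fin n → B)
    (h : ∀ t, F (f t) = some (g t)) : (List.ofFn f).filterMap F = List.ofFn g := by
  induction n with
  | zero => simp
  | succ n ih =>
    rw [List.ofFn_succ, List.ofFn_succ, List.filterMap_cons, h 0]
    exact congrArg (g 0 :: ·) (ih _ _ fun t => h t.succ)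

variable {J : Set (FPath G × FPath G)}

/-- A finite segment of a vertex sequence as a coding-graph path. -/
def segCG (v : ℕ → FPath G × FPath G) (k : ℕ) (hm : ∀ t, t ≤ k → v t ∈ J)
    (ha : ∀ t, t < k → CGAdj (v t) (v (t + 1))) : CGPath G J where
  verts := List.ofFn fun t : Fin (k + 1) => v t
  ne := by
    intro h
    have := congrArg List.length h
    simp at this
  mem := by
    intro x hx
    obtain ⟨t, ht⟩ := List.mem_ofFn.mp hx
    exact ht ▸ hm t (Nat.lt_succ_iff.mp t.2)
  adj := by
    apply List.isChain_iff_getElem.mpr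
    intro t ht
    rw [List.length_ofFn] at ht
    rw [List.getElem_ofFn, List.getElem_ofFn]
    exact ha t (by omega)

lemma segCG_length (v : ℕ → FPath G × FPath G) (k : ℕ) (hm : ∀ t, t ≤ k → v t ∈ J)
    (ha : ∀ t, t < k → CGAdj (v t) (v (t + 1))) :
    (segCG v k hm ha).verts.length = k + 1 := by
  show (List.ofFn fun t : Fin (k + 1) => v t).length = k + 1
  rw [List.length_ofFn]

lemma segCG_head (v : ℕ → FPath G × FPath G) (k : ℕ) (hm : ∀ t, t ≤ k → v t ∈ J)
    (ha : ∀ t, t < k → CGAdj (v t) (v (t + 1))) :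
    (segCG v k hm ha).verts.head (segCG v k hm ha).ne = v 0 := by
  have h1 := List.head?_eq_head (segCG v k hm ha).ne
  have h2 : (segCG v k hm ha).verts.head? = some (v 0) := by
    show (List.ofFn fun t : Fin (k + 1) => v t).head? = some (v 0)
    rw [List.ofFn_succ]
    rfl
  rw [h1] at h2
  exact Option.some.inj h2

lemma segCG_elabel (v : ℕ → FPath G × FPath G) (k : ℕ) (hm : ∀ t, t ≤ k → v t ∈ J)
    (ha : ∀ t, t < k → CGAdj (v t) (v (t + 1))) (lab : ℕ → G.E)
    (hl : ∀ t, t ≤ k → (v t).2.edges.head? = some (lab t)) :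
    (segCG v k hm ha).elabel = List.ofFn fun t : Fin (k + 1) => lab t := by
  show (List.ofFn fun t : Fin (k + 1) => v t).filterMap (fun p => p.2.edges.head?) =
    List.ofFn fun t : Fin (k + 1) => lab t
  exact filterMap_ofFn _ _ _ fun t => hl t (Nat.lt_succ_iff.mp t.2)

/-- The workhorse synchronization lemma. -/
lemma heads_eq {m : ℕ} (hsync : LeftSyncDelay G J m)
    (v w : ℕ → FPath G × FPath G) (lab : ℕ → G.E)
    (hvm : ∀ t, t ≤ m → v t ∈ J) (hva : ∀ t, t < m → CGAdj (v t) (v (t + 1)))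
    (hvl : ∀ t, t ≤ m → (v t).2.edges.head? = some (lab t))
    (hwm : ∀ t, t ≤ m → w t ∈ J) (hwa : ∀ t, t < m → CGAdj (w t) (w (t + 1)))
    (hwl : ∀ t, t ≤ m → (w t).2.edges.head? = some (lab t)) : v 0 = w 0 := by
  have h := hsync (segCG v m hvm hva) (segCG w m hwm hwa)
    (segCG_length v m hvm hva) (segCG_length w m hwm hwa)
    (by rw [segCG_elabel v m hvm hva lab hvl, segCG_elabel w m hwm hwa lab hwl])
  rwa [segCG_head v m hvm hva, segCG_head w m hwm hwa] at h

/-- `cons` with a default, to make the backward recursion total. -/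
noncomputable def consD (e : G.E) (x : IPath G) : IPath G :=
  letI := Classical.propDecidable (G.rng e = x.source)
  if h : G.rng e = x.source then myCons e x h else x

/-- The backward construction: `Dseq k j` is the candidate vertex at time `j`
built backwards from anchor `j + k`. -/
noncomputable def Dseq (hG : Standing G) (nu : IPath G → FPath G × FPath G) (α : IPath G) :
    ℕ → ℕ → FPath G × FPath G
  | 0, j => nu (shiftP α j)
  | (k + 1), j => nu (consD (α.edges j) (extPath hG (Dseq hG nu α k (j + 1)).1))

lemma step_spec (hG : Standing G) (hJ : IsUnitaryJ G J)
    (nu : IPath G → FPath G × FPath G)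
    (hnu : ∀ x, nu x ∈ J ∧ x ∈ cylinder (nu x).2) (α : IPath G) (j : ℕ)
    (q : FPath G × FPath G) (hqJ : q ∈ J)
    (y' : IPath G) (hy' : y' ∈ cylinder q.2) (hy0 : y'.edges 0 = α.edges (j + 1)) :
    nu (consD (α.edges j) (extPath hG q.1)) ∈ J ∧
    (∃ y : IPath G, y ∈ cylinder (nu (consD (α.edges j) (extPath hG q.1))).2 ∧
      y.edges 0 = α.edges j) ∧
    CGAdj (nu (consD (α.edges j) (extPath hG q.1))) q := by
  have hsrc : G.rng (α.edges j) = (extPath hG q.1).source := by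
    rw [(extPath_mem hG q.1).1, hJ.src_eq q hqJ, ← hy'.1]
    show G.rng (α.edges j) = G.src (y'.edges 0)
    rw [hy0]
    exact α.chain j
  have hD : consD (α.edges j) (extPath hG q.1) = myCons (α.edges j) (extPath hG q.1) hsrc := by
    unfold consD
    rw [dif_pos hsrc]
  set p := nu (consD (α.edges j) (extPath hG q.1)) with hp
  have hpJ : p ∈ J := (hnu _).1
  have hyc : myCons (α.edges j) (extPath hG q.1) hsrc ∈ cylinder p.2 := by
    rw [hp, hD]
    exact (hnu _).2
  refine ⟨hpJ, ⟨myCons (α.edges j) (extPath hG q.1) hsrc, hyc, rfl⟩, ?_⟩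
  exact adj_of_common p q (extPath hG q.1) (tail_mem_of_cons hyc (hJ.ne_nil p hpJ))
    (extPath_mem hG q.1)

lemma Dseq_spec (hG : Standing G) (hJ : IsUnitaryJ G J)
    (nu : IPath G → FPath G × FPath G)
    (hnu : ∀ x, nu x ∈ J ∧ x ∈ cylinder (nu x).2) (α : IPath G) :
    ∀ k j, Dseq hG nu α k j ∈ J ∧
      ∃ y : IPath G, y ∈ cylinder (Dseq hG nu α k j).2 ∧ y.edges 0 = α.edges j := by
  intro k
  induction k with
  | zero =>
    intro j
    refine ⟨(hnu _).1, shiftP α j, (hnu _).2, ?_⟩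
    show α.edges (j + 0) = α.edges j
    rw [Nat.add_zero]
  | succ k ih =>
    intro j
    obtain ⟨hqJ, y', hy', hy0⟩ := ih (j + 1)
    have h := step_spec hG hJ nu hnu α j _ hqJ y' hy' hy0
    exact ⟨h.1, h.2.1⟩

lemma Dseq_adj (hG : Standing G) (hJ : IsUnitaryJ G J)
    (nu : IPath G → FPath G × FPath G)
    (hnu : ∀ x, nu x ∈ J ∧ x ∈ cylinder (nu x).2) (α : IPath G) (k j : ℕ) :
    CGAdj (Dseq hG nu α (k + 1) j) (Dseq hG nu α k (j + 1)) := by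
  obtain ⟨hqJ, y', hy', hy0⟩ := Dseq_spec hG hJ nu hnu α k (j + 1)
  exact (step_spec hG hJ nu hnu α j _ hqJ y' hy' hy0).2.2

lemma Dseq_head (hG : Standing G) (hJ : IsUnitaryJ G J)
    (nu : IPath G → FPath G × FPath G)
    (hnu : ∀ x, nu x ∈ J ∧ x ∈ cylinder (nu x).2) (α : IPath G) (k j : ℕ) :
    (Dseq hG nu α k j).2.edges.head? = some (α.edges j) := by
  obtain ⟨hJ', y, hy, hy0⟩ := Dseq_spec hG hJ nu hnu α k j
  rw [head?_of_cyl hy (hJ.ne_nil _ hJ'), hy0]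

lemma CGIPath.ext' {ω ξ : CGIPath G J} (h : ω.verts = ξ.verts) : ω = ξ := by
  cases ω; cases ξ; cases h; rfl

end AuxLift

/-- Lemma 6.4: if all edges of `E_J` are non-negative, `E_J` has no
non-positive cycles, and `(E_J, E)` is left-synchronizing with delay `m`, then every
infinite path `α ∈ E^∞` has a unique lift `ω ∈ E_J^∞` with `E(ω) = α`; moreover the
map `α ↦ ω` is a sliding block code: there is `φ` from paths of length `m+2` in `E` to
edges of `E_J` with `ω_i = φ(α_i α_{i+1} ⋯ α_{i+m+1})` for all `i`. -/
theorem unique_lift_sliding_block (G : FinGraph) (hG : Standing G)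
    (J : Set (FPath G × FPath G)) (hJ : IsUnitaryJ G J)
    (hnn : AllEdgesNonneg G J) (hnc : ¬ HasNonposCycle G J)
    (m : ℕ) (hsync : LeftSyncDelay G J m) :
    (∀ α : IPath G, ∃! ω : CGIPath G J, ELabelInf ω α) ∧
    ∃ φ : FPath G → (FPath G × FPath G) × (FPath G × FPath G),
      ∀ (α : IPath G) (ω : CGIPath G J), ELabelInf ω α →
        ∀ (i : ℕ) (p : FPath G), p.source = G.src (α.edges i) →
          p.edges = List.ofFn (fun j : Fin (m + 2) => α.edges (i + (j : ℕ))) →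
          φ p = (ω.verts i, ω.verts (i + 1)) := by
  classical
  have hnuex : ∀ x : IPath G, ∃ p, p ∈ J ∧ x ∈ cylinder p.2 := by
    intro x
    have hx : x ∈ ⋃ p ∈ J, cylinder (Prod.snd p) := by rw [hJ.union₂]; exact Set.mem_univ x
    simpa using hx
  choose nuF hnu1 hnu2 using hnuex
  have hnu : ∀ x, nuF x ∈ J ∧ x ∈ cylinder (nuF x).2 := fun x => ⟨hnu1 x, hnu2 x⟩
  constructor
  · -- existence and uniqueness of the lift
    intro α
    set D := Dseq hG nuF α with hDdef
    have Dspec := Dseq_spec hG hJ nuF hnu α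
    have Dadj := Dseq_adj hG hJ nuF hnu α
    have Dhead := Dseq_head hG hJ nuF hnu α
    rw [← hDdef] at Dspec Dadj Dhead
    have stab : ∀ k j, m ≤ k → D k j = D m j := by
      intro k j hk
      have h := heads_eq hsync (fun t => D (k - t) (j + t)) (fun t => D (m - t) (j + t))
        (fun t => α.edges (j + t))
        (fun t _ => (Dspec _ _).1)
        (fun t ht => by
          have h1 : k - t = (k - (t + 1)) + 1 := by omega
          have h2 : j + (t + 1) = (j + t) + 1 := by omega
          rw [h1, h2]
          exact Dadj _ _)
        (fun t _ => Dhead _ _)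
        (fun t _ => (Dspec _ _).1)
        (fun t ht => by
          have h1 : m - t = (m - (t + 1)) + 1 := by omega
          have h2 : j + (t + 1) = (j + t) + 1 := by omega
          rw [h1, h2]
          exact Dadj _ _)
        (fun t _ => Dhead _ _)
      simpa using h
    refine ⟨⟨fun j => D m j, fun j => (Dspec m j).1, fun j => ?_⟩, fun i => Dhead m i, ?_⟩
    · have h := Dadj m j
      rwa [stab (m + 1) j (Nat.le_succ m)] at h
    · intro ξ hξ
      apply CGIPath.ext'
      funext j
      show ξ.verts j = D m j
      have h := heads_eq hsync (fun t => ξ.verts (j + t)) (fun t => D (m - t) (j + t))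
        (fun t => α.edges (j + t))
        (fun t _ => ξ.mem (j + t))
        (fun t ht => by
          have h2 : j + (t + 1) = (j + t) + 1 := by omega
          rw [h2]; exact ξ.adj (j + t))
        (fun t _ => hξ (j + t))
        (fun t _ => (Dspec _ _).1)
        (fun t ht => by
          have h1 : m - t = (m - (t + 1)) + 1 := by omega
          have h2 : j + (t + 1) = (j + t) + 1 := by omega
          rw [h1, h2]
          exact Dadj _ _)
        (fun t _ => Dhead _ _)
      simpa using h
  · -- the sliding block code
    set Q : FPath G → ((FPath G × FPath G) × (FPath G × FPath G)) → Prop :=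
      fun p z => ∃ (β : IPath G) (ω : CGIPath G J) (i : ℕ), ELabelInf ω β ∧
        p.edges = List.ofFn (fun j : Fin (m + 2) => β.edges (i + (j : ℕ))) ∧
        z = (ω.verts i, ω.verts (i + 1)) with hQdef
    refine ⟨fun p => if h : ∃ z, Q p z then h.choose else ((p, p), (p, p)), ?_⟩
    intro α ω hω i p hsrc hedges
    have hex : ∃ z, Q p z := ⟨(ω.verts i, ω.verts (i + 1)), α, ω, i, hω, hedges, rfl⟩
    dsimp only
    rw [dif_pos hex]
    obtain ⟨α', ω', i', hω', hed', hz⟩ := hex.choose_spec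
    rw [hz]
    have hfun : (fun j : Fin (m + 2) => α.edges (i + (j : ℕ))) =
        fun j : Fin (m + 2) => α'.edges (i' + (j : ℕ)) :=
      List.ofFn_inj.mp (hedges.symm.trans hed')
    have hwin : ∀ t, t ≤ m + 1 → α.edges (i + t) = α'.edges (i' + t) := by
      intro t ht
      have h := congrFun hfun ⟨t, by omega⟩
      simpa using h
    have h1 : ω.verts i = ω'.verts i' := by
      have h := heads_eq hsync (fun t => ω.verts (i + t)) (fun t => ω'.verts (i' + t))
        (fun t => α.edges (i + t))
        (fun t _ => ω.mem (i + t))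
        (fun t ht => by
          have h2 : i + (t + 1) = (i + t) + 1 := by omega
          rw [h2]; exact ω.adj (i + t))
        (fun t _ => hω (i + t))
        (fun t _ => ω'.mem (i' + t))
        (fun t ht => by
          have h2 : i' + (t + 1) = (i' + t) + 1 := by omega
          rw [h2]; exact ω'.adj (i' + t))
        (fun t ht => by
          rw [hω' (i' + t), ← hwin t (by omega)])
      simpa using h
    have h2 : ω.verts (i + 1) = ω'.verts (i' + 1) := by
      have h := heads_eq hsync (fun t => ω.verts (i + 1 + t)) (fun t => ω'.verts (i' + 1 + t))
        (fun t => α.edges (i + 1 + t))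
        (fun t _ => ω.mem _)
        (fun t ht => by
          have h2 : i + 1 + (t + 1) = (i + 1 + t) + 1 := by omega
          rw [h2]; exact ω.adj _)
        (fun t _ => hω _)
        (fun t _ => ω'.mem _)
        (fun t ht => by
          have h2 : i' + 1 + (t + 1) = (i' + 1 + t) + 1 := by omega
          rw [h2]; exact ω'.adj _)
        (fun t ht => by
          have e : α.edges (i + 1 + t) = α'.edges (i' + 1 + t) := by
            have hw := hwin (t + 1) (by omega)
            rwa [show i + (t + 1) = i + 1 + t by omega,
              show i' + (t + 1) = i' + 1 + t by omega] at hw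
          rw [hω' (i' + 1 + t), ← e])
      simpa using h
    rw [← h1, ← h2]
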